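/- Let π : X̃→X, with deck group Γ, be a regular covering of a connected, locally finite, countably infinite weighted graph (X,b,m), with covering graph (X̃,b̃,m̃). Assume: (1) p̃ : [0,∞)×X̃×X̃→[0,∞) satisfies the properties of the minimal heat kernel of the cover listed before (initial condition 1_{x̃}(ỹ)/m̃(x̃), heat equation in the first variable, Γ-invariance, sub-Markov property, and for each x̃ and T>0 an ℓ¹(X̃,m̃)-function dominating sup_{t∈[0,T]} p̃_t(x̃,·)), and in addition p̃ is the pointwise increasing limit, along an exhaustion of X̃ by finite connected sets D̃_i, of Dirichlet heat kernels p̃^i each satisfying the Dirichlet heat kernel properties on D̃_i; (2) p : [0,∞)×X×X→[0,∞) satisfies p₀(x,y)=1_x(y)/m(x) and the heat equation ∂_t p_t(x,y) = −𝓛 p_t(·,y)(x), is minimal among all nonnegative such solutions, and dominates subsolutions: whenever w : [0,∞)×X→[0,∞) has finite spatial support, satisfies 𝓛 w_t(y) + ∂_t w_t(y) ≤ 0 on its support and w₀ ≤ 1_x/m(x), then w_t(y) ≤ p_t(x,y) for all t,y. Then for all t≥0, all x,y∈X and all x̃∈π⁻¹(x): p_t(x,y) = ∑_{ỹ∈π⁻¹(y)}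 p̃_t(x̃,ỹ). -/

import Mathlib

open Filter Topology

/-- A function on a countable set vanishes at infinity if, for every `ε > 0`,
the set where `|f| ≥ ε` is finite. -/
def VanishesAtInfty {V : Type*} (f : V → ℝ) : Prop :=
  ∀ ε > (0 : ℝ), {x | ε ≤ |f x|}.Finite

/-- `(X, b, m)` is a weighted graph: nonnegative symmetric edge weight with vanishing
diagonal, locally finite, positive measure, connected. -/
def IsWeightedGraph {V : Type*} (b : V → V → ℝ) (m : V → ℝ) : Prop :=
  (∀ x y, 0 ≤ b x y) ∧ (∀ x y, b x y = b y x) ∧ (∀ x, b x x = 0) ∧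
    (∀ x, {y | 0 < b x y}.Finite) ∧ (∀ x, 0 < m x) ∧
    (∀ x y, Relation.ReflTransGen (fun a c => 0 < b a c) x y)

/-- The formal graph Laplacian `𝓛f(x) = (1/m x) ∑_y b x y (f x − f y)`. -/
noncomputable def lap {V : Type*} (b : V → V → ℝ) (m : V → ℝ) (f : V → ℝ) (x : V) : ℝ :=
  (1 / m x) * ∑' y, b x y * (f x - f y)

/-- The weighted degree `Deg(x) = (1/m x) ∑_y b x y`. -/
noncomputable def deg {V : Type*} (b : V → V → ℝ) (m : V → ℝ) (x : V) : ℝ :=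
  (1 / m x) * ∑' y, b x y

/-- `π : (X̃, b̃, m̃) → (X, b, m)` is a regular covering of weighted graphs with deck
transformation group `Γ`: `π` is surjective, maps the neighbourhood of each `x̃`
bijectively onto the neighbourhood of `π x̃`, the weights and measures are compatible,
every `γ ∈ Γ` is an automorphism over `π`, and `Γ` acts transitively on each fiber. -/
def IsRegularCovering {X Xc : Type*} (b : X → X → ℝ) (m : X → ℝ)
    (bc : Xc → Xc → ℝ) (mc : Xc → ℝ) (π : Xc → X)
    (Γ : Subgroup (Equiv.Perm Xc)) : Prop :=
  Function.Surjective π ∧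
    (∀ xc, Set.BijOn π {yc | 0 < bc xc yc} {y | 0 < b (π xc) y}) ∧
    (∀ xc yc, 0 < bc xc yc → bc xc yc = b (π xc) (π yc)) ∧
    (∀ xc, mc xc = m (π xc)) ∧
    (∀ γ ∈ Γ, ∀ xc, π (γ xc) = π xc) ∧
    (∀ γ ∈ Γ, ∀ xc yc, bc (γ xc) (γ yc) = bc xc yc) ∧
    (∀ xc yc, π xc = π yc → ∃ γ ∈ Γ, γ xc = yc)

/-! ### Auxiliary material on coverings of weighted graphs -/

section Lift
variable {X Xc : Type*}

open Classical in
/-- follow the edge from `zc` to the neighbour above `y` (junk value if none). -/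
noncomputable def liftNbr (bc : Xc → Xc → ℝ) (π : Xc → X) (zc : Xc) (y : X) : Xc :=
  if h : ∃ yc, 0 < bc zc yc ∧ π yc = y then h.choose else zc

/-- the finite set of neighbours of a vertex -/
noncomputable def nbr (b : X → X → ℝ) (hfin : ∀ x, {y | 0 < b x y}.Finite) (x : X) :
    Finset X := (hfin x).toFinset

variable {b : X → X → ℝ} {m : X → ℝ} {bc : Xc → Xc → ℝ} {mc : Xc → ℝ} {π : Xc → X}

theorem mem_nbr {hfin : ∀ x, {y | 0 < b x y}.Finite} {x y : X} :
    y ∈ nbr b hfin x ↔ 0 < b x y := by simp [nbr]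

theorem liftNbr_spec (hbij : ∀ xc, Set.BijOn π {yc | 0 < bc xc yc} {y | 0 < b (π xc) y})
    {zc : Xc} {y : X} (h : 0 < b (π zc) y) :
    0 < bc zc (liftNbr bc π zc y) ∧ π (liftNbr bc π zc y) = y := by
  obtain ⟨yc, hyc, hπ⟩ := (hbij zc).surjOn h
  have hex : ∃ yc, 0 < bc zc yc ∧ π yc = y := ⟨yc, hyc, hπ⟩
  rw [liftNbr, dif_pos hex]
  exact hex.choose_spec

theorem liftNbr_unique (hbij : ∀ xc, Set.BijOn π {yc | 0 < bc xc yc} {y | 0 < b (π xc) y})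
    {zc yc : Xc} {y : X} (h1 : 0 < bc zc yc) (h2 : π yc = y) :
    yc = liftNbr bc π zc y := by
  have hb : 0 < b (π zc) y := h2 ▸ (hbij zc).mapsTo h1
  obtain ⟨hpos, hπ⟩ := liftNbr_spec hbij hb
  exact (hbij zc).injOn h1 hpos (by rw [hπ, h2])

theorem nbr_sum (hbij : ∀ xc, Set.BijOn π {yc | 0 < bc xc yc} {y | 0 < b (π xc) y})
    (hbcompat : ∀ xc yc, 0 < bc xc yc → bc xc yc = b (π xc) (π yc))
    (hfinc : ∀ x, {y | 0 < bc x y}.Finite) (hfin : ∀ x, {y | 0 < b x y}.Finite)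
    (g : Xc → ℝ) (yc : Xc) :
    ∑ zc ∈ nbr bc hfinc yc, bc yc zc * g zc
      = ∑ z ∈ nbr b hfin (π yc), b (π yc) z * g (liftNbr bc π yc z) := by
  refine Finset.sum_nbij' (fun zc => π zc) (fun z => liftNbr bc π yc z) ?_ ?_ ?_ ?_ ?_
  · intro zc hzc
    exact mem_nbr.2 ((hbij yc).mapsTo (mem_nbr.1 hzc))
  · intro z hz
    exact mem_nbr.2 (liftNbr_spec hbij (mem_nbr.1 hz)).1
  · intro zc hzc
    exact (liftNbr_unique hbij (mem_nbr.1 hzc) rfl).symm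
  · intro z hz
    exact (liftNbr_spec hbij (mem_nbr.1 hz)).2
  · intro zc hzc
    rw [hbcompat yc zc (mem_nbr.1 hzc), ← liftNbr_unique hbij (mem_nbr.1 hzc) rfl]

theorem nbr_deg (hbij : ∀ xc, Set.BijOn π {yc | 0 < bc xc yc} {y | 0 < b (π xc) y})
    (hbcompat : ∀ xc yc, 0 < bc xc yc → bc xc yc = b (π xc) (π yc))
    (hfinc : ∀ x, {y | 0 < bc x y}.Finite) (hfin : ∀ x, {y | 0 < b x y}.Finite) (yc : Xc) :
    ∑ zc ∈ nbr bc hfinc yc, bc yc zc = ∑ z ∈ nbr b hfin (π yc), b (π yc) z := by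
  simpa using nbr_sum hbij hbcompat hfinc hfin (fun _ => 1) yc

/-- the equivalence between the fiber over `y` and the fiber over a neighbour `z` of `y`. -/
noncomputable def fiberEquiv (hbij : ∀ xc, Set.BijOn π {yc | 0 < bc xc yc} {y | 0 < b (π xc) y})
    (hbsymm : ∀ x y, b x y = b y x) (hbcsymm : ∀ x y, bc x y = bc y x) {y z : X} (h : 0 < b y z) :
    {yc : Xc // π yc = y} ≃ {zc : Xc // π zc = z} where
  toFun yc := ⟨liftNbr bc π yc.1 z,
    (liftNbr_spec hbij (show 0 < b (π yc.1) z by rw [yc.2]; exact h)).2⟩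
  invFun zc := ⟨liftNbr bc π zc.1 y,
    (liftNbr_spec hbij (show 0 < b (π zc.1) y by rw [zc.2, ← hbsymm]; exact h)).2⟩
  left_inv := by
    intro yc
    apply Subtype.ext
    have h1 : 0 < b (π yc.1) z := by rw [yc.2]; exact h
    obtain ⟨hpos, hπ⟩ := liftNbr_spec hbij h1
    exact (liftNbr_unique hbij (by rw [hbcsymm]; exact hpos) yc.2).symm
  right_inv := by
    intro zc
    apply Subtype.ext
    have h1 : 0 < b (π zc.1) y := by rw [zc.2, ← hbsymm]; exact h
    obtain ⟨hpos, hπ⟩ := liftNbr_spec hbij h1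
    exact (liftNbr_unique hbij (by rw [hbcsymm]; exact hpos) zc.2).symm

theorem fiber_lift_summable (hbij : ∀ xc, Set.BijOn π {yc | 0 < bc xc yc} {y | 0 < b (π xc) y})
    (hbsymm : ∀ x y, b x y = b y x) (hbcsymm : ∀ x y, bc x y = bc y x) {y z : X}
    (h : 0 < b y z) (g : Xc → ℝ) :
    Summable (fun yc : {yc : Xc // π yc = y} => g (liftNbr bc π yc.1 z)) ↔
      Summable (fun zc : {zc : Xc // π zc = z} => g zc.1) :=
  (fiberEquiv hbij hbsymm hbcsymm h).summable_iff (f := fun zc : {zc : Xc // π zc = z} => g zc.1)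

theorem fiber_lift_tsum (hbij : ∀ xc, Set.BijOn π {yc | 0 < bc xc yc} {y | 0 < b (π xc) y})
    (hbsymm : ∀ x y, b x y = b y x) (hbcsymm : ∀ x y, bc x y = bc y x) {y z : X}
    (h : 0 < b y z) (g : Xc → ℝ) :
    ∑' yc : {yc : Xc // π yc = y}, g (liftNbr bc π yc.1 z)
      = ∑' zc : {zc : Xc // π zc = z}, g zc.1 :=
  (fiberEquiv hbij hbsymm hbcsymm h).tsum_eq (f := fun zc : {zc : Xc // π zc = z} => g zc.1)

theorem fiber_nbr (hbij : ∀ xc, Set.BijOn π {yc | 0 < bc xc yc} {y | 0 < b (π xc) y})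
    (hbcompat : ∀ xc yc, 0 < bc xc yc → bc xc yc = b (π xc) (π yc))
    (hbsymm : ∀ x y, b x y = b y x) (hbcsymm : ∀ x y, bc x y = bc y x)
    (hfinc : ∀ x, {y | 0 < bc x y}.Finite) (hfin : ∀ x, {y | 0 < b x y}.Finite)
    (g : Xc → ℝ) (hg : ∀ z, Summable (fun zc : {zc : Xc // π zc = z} => g zc.1)) (y : X) :
    Summable (fun yc : {yc : Xc // π yc = y} => ∑ zc ∈ nbr bc hfinc yc.1, bc yc.1 zc * g zc) ∧
      ∑' yc : {yc : Xc // π yc = y}, (∑ zc ∈ nbr bc hfinc yc.1, bc yc.1 zc * g zc)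
        = ∑ z ∈ nbr b hfin y, b y z * ∑' zc : {zc : Xc // π zc = z}, g zc.1 := by
  have key : ∀ yc : {yc : Xc // π yc = y}, ∑ zc ∈ nbr bc hfinc yc.1, bc yc.1 zc * g zc
      = ∑ z ∈ nbr b hfin y, b y z * g (liftNbr bc π yc.1 z) := by
    intro yc
    rw [nbr_sum hbij hbcompat hfinc hfin g yc.1, yc.2]
  have hsummand : ∀ z ∈ nbr b hfin y,
      Summable (fun yc : {yc : Xc // π yc = y} => b y z * g (liftNbr bc π yc.1 z)) := by
    intro z hz
    exact ((fiber_lift_summable hbij hbsymm hbcsymm (mem_nbr.1 hz) g).2 (hg z)).mul_left _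
  constructor
  · exact (summable_congr key).2 (summable_sum hsummand)
  · rw [tsum_congr key, Summable.tsum_finsetSum hsummand]
    refine Finset.sum_congr rfl fun z hz => ?_
    rw [tsum_mul_left, fiber_lift_tsum hbij hbsymm hbcsymm (mem_nbr.1 hz) g]

theorem lap_eq_finsum (hbnn : ∀ x y, 0 ≤ b x y) (hfin : ∀ x, {y | 0 < b x y}.Finite)
    (g : X → ℝ) (x : X) :
    lap b m g x = (1 / m x) *
      ((∑ y ∈ nbr b hfin x, b x y) * g x - ∑ y ∈ nbr b hfin x, b x y * g y) := by
  rw [lap]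
  congr 1
  rw [tsum_eq_sum (s := nbr b hfin x) (fun y hy => by
    have : b x y = 0 := le_antisymm (not_lt.1 (fun h => hy (mem_nbr.2 h))) (hbnn x y)
    simp [this])]
  rw [Finset.sum_mul, ← Finset.sum_sub_distrib]
  exact Finset.sum_congr rfl fun y _ => by ring

/-- the fiber-sum identity for the Laplacian -/
theorem lap_fiber (hbij : ∀ xc, Set.BijOn π {yc | 0 < bc xc yc} {y | 0 < b (π xc) y})
    (hbcompat : ∀ xc yc, 0 < bc xc yc → bc xc yc = b (π xc) (π yc))
    (hbsymm : ∀ x y, b x y = b y x) (hbcsymm : ∀ x y, bc x y = bc y x)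
    (hbnn : ∀ x y, 0 ≤ b x y) (hbcnn : ∀ x y, 0 ≤ bc x y)
    (hfinc : ∀ x, {y | 0 < bc x y}.Finite) (hfin : ∀ x, {y | 0 < b x y}.Finite)
    (hmc : ∀ xc, mc xc = m (π xc))
    (g : Xc → ℝ) (hg : ∀ z, Summable (fun zc : {zc : Xc // π zc = z} => g zc.1)) (y : X) :
    Summable (fun yc : {yc : Xc // π yc = y} => lap bc mc g yc.1) ∧
      ∑' yc : {yc : Xc // π yc = y}, lap bc mc g yc.1
        = lap b m (fun z => ∑' zc : {zc : Xc // π zc = z}, g zc.1) y := by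
  obtain ⟨hS, hT⟩ := fiber_nbr hbij hbcompat hbsymm hbcsymm hfinc hfin g hg y
  set B := ∑ z ∈ nbr b hfin y, b y z with hB
  have hkey : ∀ yc : {yc : Xc // π yc = y}, lap bc mc g yc.1
      = (1 / m y) * (B * g yc.1 - ∑ zc ∈ nbr bc hfinc yc.1, bc yc.1 zc * g zc) := by
    intro yc
    rw [lap_eq_finsum hbcnn hfinc g yc.1, hmc yc.1, yc.2,
      nbr_deg hbij hbcompat hfinc hfin yc.1, yc.2]
  have hsum1 : Summable (fun yc : {yc : Xc // π yc = y} => B * g yc.1) := (hg y).mul_left B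
  constructor
  · exact (summable_congr hkey).2 (((hsum1.sub hS)).mul_left _)
  · rw [tsum_congr hkey, tsum_mul_left, Summable.tsum_sub hsum1 hS, tsum_mul_left, hT,
      lap_eq_finsum hbnn hfin _ y, ← hB]

end Lift

open Set in
/-- term-by-term differentiation of a series, within `Icc 0 T`. -/
theorem hasDerivWithinAt_tsum_of_bound {ι : Type*} (f : ι → ℝ → ℝ) (f' : ι → ℝ → ℝ)
    (u : ι → ℝ) (hu : Summable u) {T t : ℝ} (ht : t ∈ Icc (0:ℝ) T)
    (hs : ∀ s ∈ Icc (0:ℝ) T, Summable (fun n => f n s))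
    (hderiv : ∀ n, ∀ s ∈ Icc (0:ℝ) T, HasDerivWithinAt (f n) (f' n s) (Icc 0 T) s)
    (hbound : ∀ n, ∀ s ∈ Icc (0:ℝ) T, |f' n s| ≤ u n) :
    HasDerivWithinAt (fun s => ∑' n, f n s) (∑' n, f' n t) (Icc 0 T) t := by
  rw [hasDerivWithinAt_iff_tendsto_slope]
  have hslope : ∀ n, Tendsto (slope (f n) t) (𝓝[Icc (0:ℝ) T \ {t}] t) (𝓝 (f' n t)) := by
    intro n
    exact hasDerivWithinAt_iff_tendsto_slope.1 (hderiv n t ht)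
  have hbd : ∀ᶠ s in 𝓝[Icc (0:ℝ) T \ {t}] t, ∀ n, ‖slope (f n) t s‖ ≤ u n := by
    refine Filter.eventually_of_mem self_mem_nhdsWithin ?_
    intro s hs' n
    rcases hs' with ⟨hsI, hst⟩
    have hL : ‖f n s - f n t‖ ≤ u n * ‖s - t‖ :=
      (convex_Icc (0:ℝ) T).norm_image_sub_le_of_norm_hasDerivWithin_le
        (fun x hx => hderiv n x hx)
        (fun x hx => by rw [Real.norm_eq_abs]; exact hbound n x hx) ht hsI
    rw [slope_def_field]
    have hst' : s - t ≠ 0 := sub_ne_zero.2 (by simpa using hst)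
    rw [div_eq_mul_inv, norm_mul, norm_inv]
    calc ‖f n s - f n t‖ * ‖s - t‖⁻¹ ≤ (u n * ‖s - t‖) * ‖s - t‖⁻¹ := by
          apply mul_le_mul_of_nonneg_right hL (by positivity)
      _ = u n := by
          field_simp
  have key : Tendsto (fun s => ∑' n, slope (f n) t s) (𝓝[Icc (0:ℝ) T \ {t}] t)
      (𝓝 (∑' n, f' n t)) :=
    tendsto_tsum_of_dominated_convergence hu hslope hbd
  refine key.congr' ?_
  refine Filter.eventually_of_mem self_mem_nhdsWithin fun s hs' => ?_
  rcases hs' with ⟨hsI, hst⟩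
  have hst' : s - t ≠ 0 := sub_ne_zero.2 (by simpa using hst)
  have : ∀ n, slope (f n) t s = (f n s - f n t) / (s - t) := fun n => slope_def_field _ _ _
  simp only []
  rw [tsum_congr this, tsum_div_const, Summable.tsum_sub (hs s hsI) (hs t ht), slope_def_field]

/-- The heat kernel covering identity: if `p̃` is the minimal heat kernel of a regular
covering (obtained as the increasing limit of Dirichlet heat kernels along an exhaustion)
and `p` is the minimal heat kernel of the base (minimal among nonnegative solutions and
dominating finitely supported subsolutions), then for all `t ≥ 0`, `x, y ∈ X` and
`x̃ ∈ π⁻¹(x)` one has `p_t(x,y) = ∑_{ỹ ∈ π⁻¹(y)} p̃_t(x̃,ỹ)`. -/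
theorem stmt11 {X Xc : Type*} [Countable X] [Infinite X] [Countable Xc]
    [DecidableEq X] [DecidableEq Xc]
    (b : X → X → ℝ) (m : X → ℝ) (bc : Xc → Xc → ℝ) (mc : Xc → ℝ)
    (π : Xc → X) (Γ : Subgroup (Equiv.Perm Xc))
    (hwg : IsWeightedGraph b m) (hwgc : IsWeightedGraph bc mc)
    (hcov : IsRegularCovering b m bc mc π Γ)
    -- the minimal heat kernel of the cover
    (pc : ℝ → Xc → Xc → ℝ)
    (hnn : ∀ t, 0 ≤ t → ∀ xc yc, 0 ≤ pc t xc yc)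
    (h0 : ∀ xc yc : Xc, pc 0 xc yc = (if yc = xc then 1 else 0) / mc xc)
    (hheat : ∀ xc yc t, 0 ≤ t →
      HasDerivWithinAt (fun s => pc s xc yc)
        (-(lap bc mc (fun z => pc t z yc) xc)) (Set.Ici 0) t)
    (hinv : ∀ γ ∈ Γ, ∀ t, 0 ≤ t → ∀ xc yc, pc t (γ xc) (γ yc) = pc t xc yc)
    (hsubmk : ∀ t, 0 ≤ t → ∀ xc,
      Summable (fun yc => pc t xc yc * mc yc) ∧ ∑' yc, pc t xc yc * mc yc ≤ 1)
    (hdom : ∀ (xc : Xc) (T : ℝ), 0 < T → ∃ F : Xc → ℝ,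
      Summable (fun yc => F yc * mc yc) ∧
        ∀ yc, ∀ t ∈ Set.Icc (0 : ℝ) T, pc t xc yc ≤ F yc)
    -- an exhaustion of the cover by finite connected sets
    (Dc : ℕ → Finset Xc)
    (hDmono : Monotone Dc)
    (hDexh : ∀ xc : Xc, ∃ i, xc ∈ Dc i)
    (hDconn : ∀ i, ∀ a ∈ Dc i, ∀ c ∈ Dc i,
      Relation.ReflTransGen (fun u v => 0 < bc u v ∧ u ∈ Dc i ∧ v ∈ Dc i) a c)
    -- the Dirichlet heat kernels of the exhaustion sets
    (pDi : ℕ → ℝ → Xc → Xc → ℝ)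
    (hDinn : ∀ i t, 0 ≤ t → ∀ a c, 0 ≤ pDi i t a c)
    (hDisymm : ∀ i t, 0 ≤ t → ∀ a c, pDi i t a c = pDi i t c a)
    (hDivanish : ∀ i t, 0 ≤ t → ∀ a c,
      (¬(a ∈ Dc i ∧ ∀ e, 0 < bc a e → e ∈ Dc i) ∨
        ¬(c ∈ Dc i ∧ ∀ e, 0 < bc c e → e ∈ Dc i)) → pDi i t a c = 0)
    (hDiheat : ∀ i a c, (c ∈ Dc i ∧ ∀ e, 0 < bc c e → e ∈ Dc i) → ∀ t, 0 ≤ t →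
      HasDerivWithinAt (fun s => pDi i s a c)
        (-(lap bc mc (fun z => pDi i t a z) c)) (Set.Ici 0) t)
    (hDi0 : ∀ i a c, (a ∈ Dc i ∧ ∀ e, 0 < bc a e → e ∈ Dc i) →
      (c ∈ Dc i ∧ ∀ e, 0 < bc c e → e ∈ Dc i) →
      pDi i 0 a c = (if c = a then 1 else 0) / mc a)
    -- `pc` is the pointwise increasing limit of the Dirichlet kernels
    (hDilim : ∀ t, 0 ≤ t → ∀ a c,
      Monotone (fun i => pDi i t a c) ∧
        Filter.Tendsto (fun i => pDi i t a c) Filter.atTop (𝓝 (pc t a c)))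
    -- the minimal heat kernel of the base
    (p : ℝ → X → X → ℝ)
    (hpnn : ∀ t, 0 ≤ t → ∀ x y, 0 ≤ p t x y)
    (hp0 : ∀ x y : X, p 0 x y = (if y = x then 1 else 0) / m x)
    (hpheat : ∀ x y t, 0 ≤ t →
      HasDerivWithinAt (fun s => p s x y)
        (-(lap b m (fun z => p t z y) x)) (Set.Ici 0) t)
    -- minimality of `p` among nonnegative solutions of the heat equation
    (hmin : ∀ (x : X) (u : ℝ → X → ℝ),
      (∀ t, 0 ≤ t → ∀ y, 0 ≤ u t y) →
      (∀ y : X, u 0 y = (if y = x then 1 else 0) / m x) →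
      (∀ y t, 0 ≤ t →
        HasDerivWithinAt (fun s => u s y) (-(lap b m (u t) y)) (Set.Ici 0) t) →
      ∀ t, 0 ≤ t → ∀ y, p t x y ≤ u t y)
    -- `p` dominates finitely supported subsolutions of the heat equation
    (hdomsub : ∀ (x : X) (w : ℝ → X → ℝ) (S : Set X), S.Finite →
      (∀ t, 0 ≤ t → ∀ y, 0 ≤ w t y) →
      (∀ t (y : X), y ∉ S → w t y = 0) →
      (∀ y ∈ S, ∀ t, 0 ≤ t → ∃ w' : ℝ,
        HasDerivWithinAt (fun s => w s y) w' (Set.Ici 0) t ∧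
          lap b m (w t) y + w' ≤ 0) →
      (∀ y : X, w 0 y ≤ (if y = x then 1 else 0) / m x) →
      ∀ t, 0 ≤ t → ∀ y, w t y ≤ p t x y) :
    ∀ t, 0 ≤ t → ∀ (x y : X) (xc : Xc), π xc = x →
      Summable (fun yc : {yc : Xc // π yc = y} => pc t xc yc.1) ∧
        p t x y = ∑' yc : {yc : Xc // π yc = y}, pc t xc yc.1 := by
  classical
  obtain ⟨hbnn, hbsymm, hbdiag, hfin, hmpos, hconn⟩ := hwg
  obtain ⟨hbcnn, hbcsymm, hbcdiag, hfinc, hmcpos, hconnc⟩ := hwgc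
  obtain ⟨hsurj, hbij, hbcompat, hmc, hπΓ, hbcΓ, htrans⟩ := hcov
  -- symmetry of pc
  have hpcsymm : ∀ t, 0 ≤ t → ∀ a c, pc t a c = pc t c a := by
    intro t ht a c
    refine tendsto_nhds_unique (hDilim t ht a c).2 ?_
    exact ((hDilim t ht c a).2).congr fun i => hDisymm i t ht c a
  -- fiber summability of pc (and of any ℓ¹(m̃) function)
  have hfibsum' : ∀ (G : Xc → ℝ), Summable (fun zc => G zc * mc zc) → ∀ z : X,
      Summable (fun zc : {zc : Xc // π zc = z} => G zc.1) := by
    intro G hG z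
    have h2 : Summable (fun zc : {zc : Xc // π zc = z} => G zc.1 * mc zc.1) :=
      hG.subtype {zc : Xc | π zc = z}
    have h3 : ∀ zc : {zc : Xc // π zc = z}, G zc.1 = (G zc.1 * mc zc.1) * (1 / m z) := by
      intro zc
      rw [hmc zc.1, zc.2]
      have hm : m z ≠ 0 := (hmpos z).ne'
      field_simp
    exact (summable_congr h3).2 (h2.mul_right _)
  have hfibsum : ∀ t, 0 ≤ t → ∀ (w : Xc) (z : X),
      Summable (fun zc : {zc : Xc // π zc = z} => pc t w zc.1) :=
    fun t ht w z => hfibsum' _ (hsubmk t ht w).1 z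
  intro t ht x y xc hxc
  refine ⟨hfibsum t ht xc y, le_antisymm ?_ ?_⟩
  · -- upper bound : p ≤ fiber sum, via minimality
    have hu0 : ∀ z : X, (∑' zc : {zc : Xc // π zc = z}, pc 0 xc zc.1)
        = (if z = x then 1 else 0) / m x := by
      intro z
      by_cases hzx : z = x
      · rw [if_pos hzx]
        have hxz : π xc = z := by rw [hxc, hzx]
        have h1 : (∑' zc : {zc : Xc // π zc = z}, pc 0 xc zc.1) = pc 0 xc xc := by
          refine tsum_eq_single (⟨xc, hxz⟩ : {zc : Xc // π zc = z}) ?_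
          intro zc hzc
          rw [h0, if_neg (fun h => hzc (Subtype.ext h)), zero_div]
        rw [h1, h0, if_pos rfl, hmc xc, hxc]
      · rw [if_neg hzx]
        have h1 : ∀ zc : {zc : Xc // π zc = z}, pc 0 xc zc.1 = 0 := by
          intro zc
          rw [h0, if_neg, zero_div]
          intro h
          exact hzx (by rw [← zc.2, h, hxc])
        rw [tsum_congr h1, tsum_zero, zero_div]
    have huheat : ∀ (z : X) (t' : ℝ), 0 ≤ t' →
        HasDerivWithinAt (fun s => ∑' zc : {zc : Xc // π zc = z}, pc s xc zc.1)
          (-(lap b m (fun z' => ∑' zc : {zc : Xc // π zc = z'}, pc t' xc zc.1) z))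
          (Set.Ici 0) t' := by
      intro z t' ht'
      obtain ⟨F, hFsum, hFdom⟩ := hdom xc (t' + 1) (by linarith)
      have hFfib : ∀ z', Summable (fun zc : {zc : Xc // π zc = z'} => F zc.1) :=
        hfibsum' F hFsum
      set B := ∑ w ∈ nbr b hfin z, b z w with hB
      have hBnn : 0 ≤ B := Finset.sum_nonneg fun w _ => hbnn z w
      have hUsum : Summable (fun zc : {zc : Xc // π zc = z} =>
          (1 / m z) * (B * F zc.1 + ∑ wc ∈ nbr bc hfinc zc.1, bc zc.1 wc * F wc)) := by
        have h1 : Summable (fun zc : {zc : Xc // π zc = z} => B * F zc.1) :=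
          (hFfib z).mul_left B
        have h2 := (fiber_nbr hbij hbcompat hbsymm hbcsymm hfinc hfin F hFfib z).1
        exact ((h1.add h2).mul_left _)
      have hheat2 : ∀ (zc : Xc) (s : ℝ), s ∈ Set.Icc (0:ℝ) (t'+1) →
          HasDerivWithinAt (fun r => pc r xc zc)
            (-(lap bc mc (fun w => pc s xc w) zc)) (Set.Icc 0 (t'+1)) s := by
        intro zc s hsI
        have h1 := hheat zc xc s hsI.1
        have h2 : HasDerivWithinAt (fun r => pc r xc zc)
            (-(lap bc mc (fun w => pc s w xc) zc)) (Set.Ici 0) s :=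
          h1.congr (fun r hr => hpcsymm r hr xc zc) (hpcsymm s hsI.1 xc zc)
        have h3 : (fun w => pc s w xc) = (fun w => pc s xc w) :=
          funext fun w => hpcsymm s hsI.1 w xc
        rw [h3] at h2
        exact h2.mono (fun r hr => hr.1)
      have hder := hasDerivWithinAt_tsum_of_bound
        (fun (zc : {zc : Xc // π zc = z}) s => pc s xc zc.1)
        (fun zc s => -(lap bc mc (fun w => pc s xc w) zc.1))
        (fun zc => (1 / m z) * (B * F zc.1 + ∑ wc ∈ nbr bc hfinc zc.1, bc zc.1 wc * F wc))
        hUsum (Set.mem_Icc.2 ⟨ht', by linarith⟩)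
        (fun s hsI => hfibsum s hsI.1 xc z)
        (fun zc s hsI => hheat2 zc.1 s hsI)
        ?_
      · obtain ⟨hlS, hlT⟩ := lap_fiber hbij hbcompat hbsymm hbcsymm hbnn hbcnn hfinc hfin hmc
          (fun w => pc t' xc w) (fun z' => hfibsum t' ht' xc z') z
        have hdval : (∑' zc : {zc : Xc // π zc = z}, -(lap bc mc (fun w => pc t' xc w) zc.1))
            = -(lap b m (fun z' => ∑' zc : {zc : Xc // π zc = z'}, pc t' xc zc.1) z) := by
          rw [tsum_neg, hlT]
        rw [hdval] at hder
        refine hder.mono_of_mem_nhdsWithin ?_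
        refine mem_nhdsWithin.2 ⟨Set.Iio (t'+1), isOpen_Iio, by simp, ?_⟩
        intro r hr
        exact ⟨hr.2, hr.1.le⟩
      · intro zc s hsI
        rw [abs_neg, lap_eq_finsum hbcnn hfinc _ zc.1, hmc zc.1,
          nbr_deg hbij hbcompat hfinc hfin zc.1, zc.2, ← hB]
        have hmz : (0:ℝ) ≤ 1 / m z := one_div_nonneg.2 (hmpos z).le
        rw [abs_mul, abs_of_nonneg hmz]
        refine mul_le_mul_of_nonneg_left ?_ hmz
        have hA : 0 ≤ B * pc s xc zc.1 := mul_nonneg hBnn (hnn s hsI.1 xc zc.1)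
        have hC : 0 ≤ ∑ wc ∈ nbr bc hfinc zc.1, bc zc.1 wc * pc s xc wc :=
          Finset.sum_nonneg fun wc _ => mul_nonneg (hbcnn _ _) (hnn s hsI.1 xc wc)
        have hA2 : B * pc s xc zc.1 ≤ B * F zc.1 :=
          mul_le_mul_of_nonneg_left (hFdom zc.1 s hsI) hBnn
        have hC2 : (∑ wc ∈ nbr bc hfinc zc.1, bc zc.1 wc * pc s xc wc)
            ≤ ∑ wc ∈ nbr bc hfinc zc.1, bc zc.1 wc * F wc :=
          Finset.sum_le_sum fun wc _ =>
            mul_le_mul_of_nonneg_left (hFdom wc s hsI) (hbcnn _ _)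
        rw [abs_sub_le_iff]
        constructor <;> linarith
    exact hmin x (fun s z => ∑' zc : {zc : Xc // π zc = z}, pc s xc zc.1)
      (fun t'' ht'' z => tsum_nonneg fun zc => hnn t'' ht'' xc zc.1) hu0
      (fun z t'' ht'' => huheat z t'' ht'') t ht y
  · -- lower bound : fiber sum ≤ p, via Dirichlet approximation
    have hKfin : ∀ (i : ℕ) (z : X),
        (Subtype.val ⁻¹' (↑(Dc i) : Set Xc) : Set {zc : Xc // π zc = z}).Finite :=
      fun i z => Set.Finite.preimage (Subtype.val_injective.injOn) (Dc i).finite_toSet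
    have hmemK : ∀ (i : ℕ) (z : X) (zc : {zc : Xc // π zc = z}),
        zc ∈ (hKfin i z).toFinset ↔ zc.1 ∈ Dc i := by
      intro i z zc; simp [Set.Finite.mem_toFinset]
    have hDfib : ∀ (i : ℕ) (s : ℝ), 0 ≤ s → ∀ z : X,
        Summable (fun zc : {zc : Xc // π zc = z} => pDi i s xc zc.1) := by
      intro i s hs z
      refine summable_of_ne_finset_zero (s := (hKfin i z).toFinset) ?_
      intro zc hzc
      refine hDivanish i s hs xc zc.1 (Or.inr ?_)
      intro hint
      exact hzc ((hmemK i z zc).2 hint.1)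
    have hwle : ∀ (i : ℕ) (z0 : X),
        (∑' zc : {zc : Xc // π zc = z0}, pDi i t xc zc.1) ≤ p t x z0 := by
      intro i z0
      have hvan : ∀ (s : ℝ) (z : X) (zc : {zc : Xc // π zc = z}),
          zc ∉ (hKfin i z).toFinset → pDi i (max s 0) xc zc.1 = 0 := by
        intro s z zc hzc
        refine hDivanish i (max s 0) (le_max_right s 0) xc zc.1 (Or.inr ?_)
        intro hint
        exact hzc ((hmemK i z zc).2 hint.1)
      have hweq : ∀ (s : ℝ) (z : X),
          (∑' zc : {zc : Xc // π zc = z}, pDi i (max s 0) xc zc.1)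
            = ∑ zc ∈ (hKfin i z).toFinset, pDi i (max s 0) xc zc.1 :=
        fun s z => tsum_eq_sum (fun zc hzc => hvan s z zc hzc)
      set w : ℝ → X → ℝ :=
        fun s z => ∑' zc : {zc : Xc // π zc = z}, pDi i (max s 0) xc zc.1 with hw
      have hwnn : ∀ s, 0 ≤ s → ∀ z, 0 ≤ w s z :=
        fun s _ z => tsum_nonneg fun zc => hDinn i (max s 0) (le_max_right _ _) xc zc.1
      have hwsupp : ∀ (s : ℝ) (z : X), z ∉ (↑((Dc i).image π) : Set X) → w s z = 0 := by
        intro s z hz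
        rw [hw]
        simp only []
        rw [hweq s z]
        refine Finset.sum_eq_zero ?_
        intro zc hzc
        exfalso
        refine hz ?_
        simp only [Finset.coe_image, Set.mem_image, Finset.mem_coe]
        exact ⟨zc.1, (hmemK i z zc).1 hzc, zc.2⟩
      have hw0 : ∀ z : X, w 0 z ≤ (if z = x then 1 else 0) / m x := by
        intro z
        have h1 : w 0 z = ∑ zc ∈ (hKfin i z).toFinset, pDi i 0 xc zc.1 := by
          rw [hw]
          simp only [max_self]
          refine tsum_eq_sum ?_
          intro zc hzc
          have := hvan 0 z zc hzc
          rwa [max_self] at this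
        rw [h1]
        by_cases hzx : z = x
        · rw [if_pos hzx]
          have hxz : π xc = z := by rw [hxc, hzx]
          have hterm : ∀ zc ∈ (hKfin i z).toFinset,
              pDi i 0 xc zc.1 ≤ (if zc = (⟨xc, hxz⟩ : {zc : Xc // π zc = z})
                then 1 / m x else 0) := by
            intro zc _
            by_cases hii : (xc ∈ Dc i ∧ ∀ e, 0 < bc xc e → e ∈ Dc i) ∧
                (zc.1 ∈ Dc i ∧ ∀ e, 0 < bc zc.1 e → e ∈ Dc i)
            · rw [hDi0 i xc zc.1 hii.1 hii.2, hmc xc, hxc]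
              by_cases hzc1 : zc.1 = xc
              · rw [if_pos hzc1, if_pos (Subtype.ext hzc1)]
              · rw [if_neg hzc1, if_neg (fun h => hzc1 (congrArg Subtype.val h)), zero_div]
            · rw [hDivanish i 0 le_rfl xc zc.1 (not_and_or.1 hii)]
              split
              · exact one_div_nonneg.2 (hmpos x).le
              · exact le_rfl
          refine le_trans (Finset.sum_le_sum hterm) ?_
          rw [Finset.sum_ite_eq' ((hKfin i z).toFinset) (⟨xc, hxz⟩ : {zc : Xc // π zc = z})
            (fun _ => 1 / m x)]
          split
          · exact le_rfl
          · exact one_div_nonneg.2 (hmpos x).le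
        · rw [if_neg hzx, zero_div]
          refine le_of_eq (Finset.sum_eq_zero ?_)
          intro zc _
          by_cases hii : (xc ∈ Dc i ∧ ∀ e, 0 < bc xc e → e ∈ Dc i) ∧
              (zc.1 ∈ Dc i ∧ ∀ e, 0 < bc zc.1 e → e ∈ Dc i)
          · rw [hDi0 i xc zc.1 hii.1 hii.2, if_neg, zero_div]
            intro h
            exact hzx (by rw [← zc.2, h, hxc])
          · exact hDivanish i 0 le_rfl xc zc.1 (not_and_or.1 hii)
      have hwsub : ∀ z ∈ (↑((Dc i).image π) : Set X), ∀ t'', 0 ≤ t'' → ∃ w' : ℝ,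
          HasDerivWithinAt (fun s => w s z) w' (Set.Ici 0) t'' ∧
            lap b m (w t'') z + w' ≤ 0 := by
        intro z _ t'' ht''
        have hgfib : ∀ z', Summable
            (fun zc : {zc : Xc // π zc = z'} => pDi i t'' xc zc.1) := hDfib i t'' ht''
        refine ⟨∑ zc ∈ (hKfin i z).toFinset,
          (if (zc.1 ∈ Dc i ∧ ∀ e, 0 < bc zc.1 e → e ∈ Dc i)
            then -(lap bc mc (fun e => pDi i t'' xc e) zc.1) else 0), ?_, ?_⟩
        · have heq : (fun s => w s z)
              = fun s => ∑ zc ∈ (hKfin i z).toFinset, pDi i (max s 0) xc zc.1 := by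
            funext s
            rw [hw]
            exact hweq s z
          rw [heq]
          refine HasDerivWithinAt.fun_sum ?_
          intro zc _
          by_cases hI : zc.1 ∈ Dc i ∧ ∀ e, 0 < bc zc.1 e → e ∈ Dc i
          · rw [if_pos hI]
            have h := hDiheat i xc zc.1 hI t'' ht''
            exact h.congr (fun s hs => by rw [max_eq_left hs]) (by rw [max_eq_left ht''])
          · rw [if_neg hI]
            have hz0 : ∀ s : ℝ, pDi i (max s 0) xc zc.1 = 0 :=
              fun s => hDivanish i (max s 0) (le_max_right s 0) xc zc.1 (Or.inr hI)
            exact (hasDerivWithinAt_const t'' (Set.Ici 0) (0:ℝ)).congr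
              (fun s _ => hz0 s) (hz0 t'')
        · obtain ⟨hlS, hlT⟩ := lap_fiber hbij hbcompat hbsymm hbcsymm hbnn hbcnn hfinc hfin
            hmc (fun e => pDi i t'' xc e) hgfib z
          have hwt : w t'' = fun z' => ∑' zc : {zc : Xc // π zc = z'}, pDi i t'' xc zc.1 := by
            funext z'
            rw [hw]
            simp only [max_eq_left ht'']
          have hlap : lap b m (w t'') z
              = ∑' zc : {zc : Xc // π zc = z}, lap bc mc (fun e => pDi i t'' xc e) zc.1 := by
            rw [hwt, ← hlT]
          have hnonpos : ∀ zc : {zc : Xc // π zc = z},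
              ¬(zc.1 ∈ Dc i ∧ ∀ e, 0 < bc zc.1 e → e ∈ Dc i) →
              lap bc mc (fun e => pDi i t'' xc e) zc.1 ≤ 0 := by
            intro zc hI
            rw [lap_eq_finsum hbcnn hfinc _ zc.1]
            have hgz : pDi i t'' xc zc.1 = 0 := hDivanish i t'' ht'' xc zc.1 (Or.inr hI)
            rw [hgz, mul_zero, zero_sub]
            refine mul_nonpos_of_nonneg_of_nonpos (one_div_nonneg.2 (hmcpos zc.1).le) ?_
            exact neg_nonpos.2 (Finset.sum_nonneg fun wc _ =>
              mul_nonneg (hbcnn _ _) (hDinn i t'' ht'' xc wc))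
          have hsplit := Summable.sum_add_tsum_compl (s := (hKfin i z).toFinset)
            (f := fun zc : {zc : Xc // π zc = z} =>
              lap bc mc (fun e => pDi i t'' xc e) zc.1) hlS
          have hcompl : (∑' zc : ↑((↑((hKfin i z).toFinset) : Set {zc : Xc // π zc = z})ᶜ),
              lap bc mc (fun e => pDi i t'' xc e) zc.1.1) ≤ 0 := by
            refine tsum_nonpos ?_
            intro zc
            refine hnonpos zc.1 ?_
            intro hI
            exact zc.2 (Finset.mem_coe.2 ((hmemK i z zc.1).2 hI.1))
          have hKsum : (∑ zc ∈ (hKfin i z).toFinset,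
              (lap bc mc (fun e => pDi i t'' xc e) zc.1 +
              (if (zc.1 ∈ Dc i ∧ ∀ e, 0 < bc zc.1 e → e ∈ Dc i)
                then -(lap bc mc (fun e => pDi i t'' xc e) zc.1) else 0))) ≤ 0 := by
            refine Finset.sum_nonpos ?_
            intro zc _
            by_cases hI : zc.1 ∈ Dc i ∧ ∀ e, 0 < bc zc.1 e → e ∈ Dc i
            · rw [if_pos hI]
              linarith
            · rw [if_neg hI, add_zero]
              exact hnonpos zc hI
          rw [Finset.sum_add_distrib] at hKsum
          rw [hlap, ← hsplit]
          linarith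
      have hdom' := hdomsub x w (↑((Dc i).image π)) (Finset.finite_toSet _) hwnn
        (fun s z hz => hwsupp s z hz) hwsub hw0 t ht z0
      have hwtz : w t z0 = ∑' zc : {zc : Xc // π zc = z0}, pDi i t xc zc.1 := by
        rw [hw]
        simp only [max_eq_left ht]
      rw [hwtz] at hdom'
      exact hdom'
    refine Summable.tsum_le_of_sum_le (hfibsum t ht xc y) ?_
    intro Fs
    refine le_of_tendsto (tendsto_finset_sum Fs fun zc _ => (hDilim t ht xc zc.1).2)
      (Filter.Eventually.of_forall fun i => ?_)
    calc ∑ zc ∈ Fs, pDi i t xc zc.1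
        ≤ ∑' zc : {zc : Xc // π zc = y}, pDi i t xc zc.1 :=
          Summable.sum_le_tsum Fs (fun zc _ => hDinn i t ht xc zc.1) (hDfib i t ht y)
      _ ≤ p t x y := hwle i y
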